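/- For n ≥ 15 let l*_n = ⌈n/e²⌉ and define a^{(n)}_i = 0 for 1 ≤ i < l*_n and a^{(n)}_i = ((l*_n − 1)/i)·Σ_{j=l*_n}^{i} 1/(j−1) for l*_n ≤ i ≤ n. Let ā^{(n)} = (1/n)·Σ_{i=1}^n a^{(n)}_i and a*^{(n)} = max_{1≤i≤n} a^{(n)}_i. Then liminf_{n→∞} ā^{(n)} ≥ 2/e² and lim_{n→∞} a*^{(n)} = 1/e. -/

import Mathlib

open scoped BigOperators

open Filter Finset Real

/-- `l*_n = ⌈n / e²⌉`. -/
noncomputable def lstar (n : ℕ) : ℕ := ⌈(n : ℝ) / Real.exp 2⌉₊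

/-- The vector `a^{(n)}`: `a_i = 0` for `i < l*_n`, and
`a_i = ((l*_n - 1)/i) Σ_{j=l*_n}^i 1/(j-1)` for `i ≥ l*_n`. -/
noncomputable def aseq (n i : ℕ) : ℝ :=
  if lstar n ≤ i then
    (((lstar n : ℝ) - 1) / (i : ℝ)) * ∑ j ∈ Finset.Icc (lstar n) i, 1 / ((j : ℝ) - 1)
  else 0

/-! ### Telescoping lemmas -/

lemma tele_ge (g f : ℕ → ℝ) (l : ℕ) :
    ∀ m, l ≤ m + 1 → (∀ j ∈ Finset.Icc l m, g j - g (j+1) ≤ f j) →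
      g l - g (m+1) ≤ ∑ j ∈ Finset.Icc l m, f j := by
  intro m
  induction m with
  | zero =>
    intro hl h
    interval_cases l
    · simpa using h 0 (by simp)
    · simp
  | succ m ih =>
    intro hl h
    rcases Nat.lt_or_ge (m+1) l with hc | hc
    · have : l = m + 2 := le_antisymm hl hc
      subst this
      rw [Finset.Icc_eq_empty (by omega)]
      simp
    · rw [Finset.sum_Icc_succ_top (by omega)]
      have h1 := ih (by omega) (fun j hj => h j (by simp only [Finset.mem_Icc] at hj ⊢; omega))
      have h2 := h (m+1) (by simp only [Finset.mem_Icc]; omega)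
      linarith

lemma tele_le (g f : ℕ → ℝ) (l : ℕ) (m : ℕ) (hl : l ≤ m + 1)
    (h : ∀ j ∈ Finset.Icc l m, f j ≤ g j - g (j+1)) :
    ∑ j ∈ Finset.Icc l m, f j ≤ g l - g (m+1) := by
  have := tele_ge (fun j => -g j) (fun j => -f j) l m hl (fun j hj => by
    have := h j hj; linarith)
  simp only [Finset.sum_neg_distrib] at this
  linarith

/-! ### Harmonic-sum estimates -/

lemma sum_inv_ge (j n : ℕ) (hj : 1 ≤ j) (hjn : j ≤ n + 1) :
    Real.log (n+1) - Real.log j ≤ ∑ i ∈ Finset.Icc j n, 1/(i:ℝ) := by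
  have := tele_ge (fun i => -Real.log i) (fun i => 1/(i:ℝ)) j n hjn (fun i hi => by
    simp only [Finset.mem_Icc] at hi
    have hi1 : (1:ℝ) ≤ i := by exact_mod_cast hi.1.trans' hj
    have h0 : (0:ℝ) < i := by linarith
    have h2 : Real.log ((i+1)/i) ≤ (i+1)/(i:ℝ) - 1 :=
      Real.log_le_sub_one_of_pos (by positivity)
    rw [Real.log_div (by positivity) (by positivity)] at h2
    have h3 : ((i:ℝ)+1)/i - 1 = 1/(i:ℝ) := by field_simp; ring
    push_cast
    linarith [h3 ▸ h2])
  push_cast at this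
  linarith

lemma sum_inv_sub_one_ge (l i : ℕ) (hl : 2 ≤ l) (hli : l ≤ i + 1) :
    Real.log i - Real.log ((l:ℝ)-1) ≤ ∑ j ∈ Finset.Icc l i, 1/((j:ℝ)-1) := by
  have := tele_ge (fun j => -Real.log ((j:ℝ)-1)) (fun j => 1/((j:ℝ)-1)) l i hli
    (fun j hj => by
      simp only [Finset.mem_Icc] at hj
      have hj2 : (2:ℝ) ≤ j := by exact_mod_cast hj.1.trans' hl
      have h0 : (0:ℝ) < (j:ℝ) - 1 := by linarith
      have h2 : Real.log ((j:ℝ)/((j:ℝ)-1)) ≤ (j:ℝ)/((j:ℝ)-1) - 1 :=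
        Real.log_le_sub_one_of_pos (div_pos (by linarith) h0)
      rw [Real.log_div (by positivity) (by positivity)] at h2
      have h3 : (j:ℝ)/((j:ℝ)-1) - 1 = 1/((j:ℝ)-1) := by field_simp; ring
      push_cast
      rw [show (j:ℝ)+1-1 = (j:ℝ) by ring]
      linarith [h3 ▸ h2])
  push_cast at this
  rw [show (i:ℝ)+1-1 = (i:ℝ) by ring] at this
  linarith

lemma sum_inv_sub_one_le (l i : ℕ) (hl : 3 ≤ l) (hli : l ≤ i + 1) :
    ∑ j ∈ Finset.Icc l i, 1/((j:ℝ)-1) ≤ Real.log ((i:ℝ)-1) - Real.log ((l:ℝ)-2) := by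
  have := tele_le (fun j => -Real.log ((j:ℝ)-2)) (fun j => 1/((j:ℝ)-1)) l i hli
    (fun j hj => by
      simp only [Finset.mem_Icc] at hj
      have hj3 : (3:ℝ) ≤ j := by exact_mod_cast hj.1.trans' hl
      have h0 : (0:ℝ) < (j:ℝ) - 2 := by linarith
      have h1 : (0:ℝ) < (j:ℝ) - 1 := by linarith
      have h2 : 1 - (((j:ℝ)-1)/((j:ℝ)-2))⁻¹ ≤ Real.log (((j:ℝ)-1)/((j:ℝ)-2)) :=
        Real.one_sub_inv_le_log_of_pos (div_pos h1 h0)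
      rw [Real.log_div (by positivity) (by positivity)] at h2
      have h3 : 1 - (((j:ℝ)-1)/((j:ℝ)-2))⁻¹ = 1/((j:ℝ)-1) := by
        rw [inv_div]; field_simp; norm_num
      push_cast
      rw [show (j:ℝ)+1-2 = (j:ℝ)-1 by ring]
      linarith [h3 ▸ h2])
  push_cast at this
  rw [show (i:ℝ)+1-2 = (i:ℝ)-1 by ring] at this
  linarith

lemma sq_log_sum (l n : ℕ) (hl : 2 ≤ l) (hln : l ≤ n + 1) :
    (Real.log (n+1) - Real.log l)^2/2 ≤
      ∑ j ∈ Finset.Icc l n, (1/((j:ℝ)-1)) * (Real.log (n+1) - Real.log j) := by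
  have := tele_ge (fun j => (Real.log (n+1) - Real.log j)^2/2)
      (fun j => (1/((j:ℝ)-1)) * (Real.log (n+1) - Real.log j)) l n hln (fun j hj => by
    simp only [Finset.mem_Icc] at hj
    have hj2 : (2:ℝ) ≤ j := by exact_mod_cast hj.1.trans' hl
    have hjn : (j:ℝ) + 1 ≤ (n:ℝ) + 1 := by
      have : (j:ℝ) ≤ n := by exact_mod_cast hj.2
      linarith
    set A := Real.log (n+1) - Real.log j with hA
    set B := Real.log (n+1) - Real.log ((j:ℕ)+1:ℕ) with hB
    have hcast : ((((j:ℕ)+1:ℕ)):ℝ) = (j:ℝ)+1 := by push_cast; ring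
    have hBA : B ≤ A := by
      have := Real.log_le_log (by linarith : (0:ℝ) < j) (by linarith : (j:ℝ) ≤ (j:ℝ)+1)
      simp only [hA, hB, hcast]
      linarith
    have hB0 : 0 ≤ B := by
      have := Real.log_le_log (by linarith : (0:ℝ) < (j:ℝ)+1) hjn
      simp only [hB, hcast]
      linarith
    have hdiff : A - B ≤ 1/((j:ℝ)-1) := by
      have h2 : Real.log (((j:ℝ)+1)/j) ≤ ((j:ℝ)+1)/j - 1 :=
        Real.log_le_sub_one_of_pos (div_pos (by linarith) (by linarith))
      rw [Real.log_div (by linarith) (by linarith)] at h2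
      have h3 : ((j:ℝ)+1)/j - 1 = 1/(j:ℝ) := by field_simp; ring
      have h4 : 1/(j:ℝ) ≤ 1/((j:ℝ)-1) := by
        apply div_le_div_of_nonneg_left (by norm_num) (by linarith) (by linarith)
      simp only [hA, hB, hcast]
      linarith [h3 ▸ h2]
    have hA0 : 0 ≤ A := le_trans hB0 hBA
    push_cast
    nlinarith [sq_nonneg (A - B), mul_nonneg hA0 (sub_nonneg.2 hdiff)])
  push_cast at this
  rw [show Real.log ((n:ℝ)+1) - Real.log ((n:ℝ)+1) = 0 by ring] at this
  simp at this
  simpa [one_div] using this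

/-! ### Basic facts about `lstar` -/

lemma exp_two_lt_eight : Real.exp 2 < 8 := by
  have h := Real.exp_one_lt_d9
  have h2 : Real.exp 2 = Real.exp 1 * Real.exp 1 := by rw [← Real.exp_add]; norm_num
  nlinarith [Real.exp_pos 1]

lemma one_lt_exp_two : 1 < Real.exp 2 := by
  have := Real.add_one_le_exp (2:ℝ); linarith

lemma lstar_ge {n : ℕ} : (n:ℝ)/Real.exp 2 ≤ lstar n := Nat.le_ceil _

lemma lstar_lt {n : ℕ} : (lstar n:ℝ) < (n:ℝ)/Real.exp 2 + 1 :=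
  Nat.ceil_lt_add_one (by positivity)

lemma lstar_ge13 {n : ℕ} (hn : 100 ≤ n) : 13 ≤ lstar n := by
  have h1 : (12:ℝ) < (n:ℝ)/Real.exp 2 := by
    have hn' : (100:ℝ) ≤ n := by exact_mod_cast hn
    rw [lt_div_iff₀ (Real.exp_pos 2)]
    nlinarith [exp_two_lt_eight, Real.exp_pos 2]
  have : (12:ℝ) < lstar n := h1.trans_le lstar_ge
  exact_mod_cast Nat.succ_le_of_lt (by exact_mod_cast this : 12 < lstar n)

lemma lstar_le_self {n : ℕ} : lstar n ≤ n := by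
  apply Nat.ceil_le.mpr
  exact div_le_self (by positivity) one_lt_exp_two.le

lemma aseq_nonneg {n i : ℕ} (hn : 1 ≤ n) : 0 ≤ aseq n i := by
  unfold aseq
  split
  · next h =>
    have hl1 : 1 ≤ lstar n := by
      apply Nat.one_le_ceil_iff.mpr
      positivity
    apply mul_nonneg
    · apply div_nonneg _ (Nat.cast_nonneg i)
      have : (1:ℝ) ≤ lstar n := by exact_mod_cast hl1
      linarith
    · apply Finset.sum_nonneg
      intro j hj
      simp only [Finset.mem_Icc] at hj
      have : (1:ℝ) ≤ j := by exact_mod_cast hj.1.trans' hl1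
      rcases eq_or_lt_of_le this with h | h
      · rw [← h]; norm_num
      · have h1 : (0:ℝ) < (j:ℝ) - 1 := by linarith
        positivity
  · exact le_refl 0

/-! ### Part 1: lower bound for the mean -/

lemma part1_main {n : ℕ} (hn : 100 ≤ n) :
    ((lstar n:ℝ)-1) * ((Real.log ((n:ℝ)+1) - Real.log (lstar n))^2/2)
      ≤ ∑ i ∈ Finset.Icc 1 n, aseq n i := by
  set l := lstar n with hl
  have h13 := lstar_ge13 hn
  have hln := lstar_le_self (n := n)
  have hn1 : 1 ≤ n := by omega
  have hl1R : (13:ℝ) ≤ l := by exact_mod_cast h13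
  have key : ∀ i ∈ Finset.Icc l n, aseq n i
      = ∑ j ∈ Finset.Icc l i, ((((l:ℝ)-1)/i) * (1/((j:ℝ)-1))) := by
    intro i hi
    simp only [Finset.mem_Icc] at hi
    rw [aseq, if_pos hi.1, Finset.mul_sum]
  calc ((l:ℝ)-1) * ((Real.log ((n:ℝ)+1) - Real.log l)^2/2)
      ≤ ((l:ℝ)-1) * ∑ j ∈ Finset.Icc l n, (1/((j:ℝ)-1)) * (Real.log ((n:ℝ)+1) - Real.log j) :=
        mul_le_mul_of_nonneg_left (sq_log_sum l n (by omega) (by omega)) (by linarith)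
    _ = ∑ j ∈ Finset.Icc l n, ((l:ℝ)-1) * ((1/((j:ℝ)-1)) * (Real.log ((n:ℝ)+1) - Real.log j)) :=
        Finset.mul_sum _ _ _
    _ ≤ ∑ j ∈ Finset.Icc l n, ∑ i ∈ Finset.Icc j n, ((((l:ℝ)-1)/i) * (1/((j:ℝ)-1))) := by
        apply Finset.sum_le_sum
        intro j hj
        simp only [Finset.mem_Icc] at hj
        have hj1 : 1 ≤ j := by omega
        have hjR : (13:ℝ) ≤ j := by exact_mod_cast h13.trans hj.1
        have e1 : ∑ i ∈ Finset.Icc j n, ((((l:ℝ)-1)/i) * (1/((j:ℝ)-1)))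
            = (((l:ℝ)-1) * (1/((j:ℝ)-1))) * ∑ i ∈ Finset.Icc j n, (1/(i:ℝ)) := by
          rw [Finset.mul_sum]; exact Finset.sum_congr rfl (fun i _ => by ring)
        rw [e1]
        have hge := sum_inv_ge j n hj1 (by omega)
        have hj0 : (0:ℝ) < (j:ℝ)-1 := by linarith
        have hnn : 0 ≤ ((l:ℝ)-1) * (1/((j:ℝ)-1)) := mul_nonneg (by linarith) (by positivity)
        calc ((l:ℝ)-1) * ((1/((j:ℝ)-1)) * (Real.log ((n:ℝ)+1) - Real.log j))
            = (((l:ℝ)-1) * (1/((j:ℝ)-1))) * (Real.log ((n:ℝ)+1) - Real.log j) := by ring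
          _ ≤ _ := mul_le_mul_of_nonneg_left hge hnn
    _ = ∑ i ∈ Finset.Icc l n, ∑ j ∈ Finset.Icc l i, ((((l:ℝ)-1)/i) * (1/((j:ℝ)-1))) := by
        refine (Finset.sum_comm' ?_).symm
        intro i j
        simp only [Finset.mem_Icc]
        omega
    _ = ∑ i ∈ Finset.Icc l n, aseq n i := (Finset.sum_congr rfl key).symm
    _ ≤ ∑ i ∈ Finset.Icc 1 n, aseq n i :=
        Finset.sum_le_sum_of_subset_of_nonneg
          (Finset.Icc_subset_Icc (by omega) le_rfl) (fun i _ _ => aseq_nonneg hn1)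

/-! ### Limit computations -/

lemma lstar_tendsto : Tendsto (fun n : ℕ => (lstar n : ℝ)) atTop atTop := by
  apply tendsto_atTop_mono (fun n => lstar_ge)
  exact (tendsto_natCast_atTop_atTop).atTop_div_const (Real.exp_pos 2)

lemma lstar_ratio : Tendsto (fun n : ℕ => (lstar n : ℝ)/n) atTop (nhds (Real.exp 2)⁻¹) := by
  refine tendsto_of_tendsto_of_tendsto_of_le_of_le' (g := fun _ : ℕ => (Real.exp 2)⁻¹)
      (h := fun n : ℕ => (Real.exp 2)⁻¹ + 1/(n:ℝ)) tendsto_const_nhds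
      (by simpa using tendsto_const_nhds.add (tendsto_one_div_atTop_nhds_zero_nat (𝕜 := ℝ))) ?_ ?_
  · filter_upwards [eventually_ge_atTop 1] with n hn
    have hn0 : (0:ℝ) < n := by exact_mod_cast hn
    have h := lstar_ge (n := n)
    rw [div_le_iff₀ (Real.exp_pos 2)] at h
    rw [inv_eq_one_div, div_le_div_iff₀ (Real.exp_pos 2) hn0]
    linarith
  · filter_upwards [eventually_ge_atTop 1] with n hn
    have hn0 : (0:ℝ) < n := by exact_mod_cast hn
    have := (lstar_lt (n := n)).le
    calc (lstar n : ℝ)/n ≤ ((n:ℝ)/Real.exp 2 + 1)/n := by gcongr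
      _ = (Real.exp 2)⁻¹ + 1/(n:ℝ) := by field_simp

lemma log_ratio_tendsto :
    Tendsto (fun n : ℕ => Real.log ((n:ℝ)+1) - Real.log (lstar n)) atTop (nhds 2) := by
  have hq : Tendsto (fun n : ℕ => ((n:ℝ)+1)/(lstar n)) atTop (nhds (Real.exp 2)) := by
    have h1 : Tendsto (fun n : ℕ => ((n:ℝ)+1)/n) atTop (nhds 1) := by
      apply Tendsto.congr' (f₁ := fun n : ℕ => 1 + 1/(n:ℝ))
      · filter_upwards [eventually_ge_atTop 1] with n hn
        have hn0 : (0:ℝ) < n := by exact_mod_cast hn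
        field_simp
      · simpa using tendsto_const_nhds.add (tendsto_one_div_atTop_nhds_zero_nat (𝕜 := ℝ))
    have h2 : Tendsto (fun n : ℕ => (n:ℝ)/(lstar n)) atTop (nhds (Real.exp 2)) := by
      have := lstar_ratio.inv₀ (by positivity)
      simpa [inv_div] using this
    have h3 := h1.mul h2
    rw [one_mul] at h3
    apply h3.congr'
    filter_upwards [eventually_ge_atTop 100] with n hn
    have hn0 : (0:ℝ) < n := by positivity
    have hl0 : (0:ℝ) < lstar n := by
      have : (13:ℝ) ≤ lstar n := by exact_mod_cast lstar_ge13 hn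
      linarith
    field_simp
  have hlog := (Real.continuousAt_log (by positivity : Real.exp 2 ≠ 0)).tendsto.comp hq
  rw [Real.log_exp] at hlog
  apply hlog.congr'
  filter_upwards [eventually_ge_atTop 100] with n hn
  have hn0 : (0:ℝ) < (n:ℝ)+1 := by positivity
  have hl0 : (0:ℝ) < lstar n := by
    have : (13:ℝ) ≤ lstar n := by exact_mod_cast lstar_ge13 hn
    linarith
  simp only [Function.comp_apply]
  rw [Real.log_div (by positivity) (by positivity)]

lemma b_tendsto :
    Tendsto (fun n : ℕ => (1/(n:ℝ)) * (((lstar n:ℝ)-1) *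
      ((Real.log ((n:ℝ)+1) - Real.log (lstar n))^2/2))) atTop (nhds (2/Real.exp 2)) := by
  have h1 : Tendsto (fun n : ℕ => ((lstar n:ℝ)-1)/n) atTop (nhds (Real.exp 2)⁻¹) := by
    have := lstar_ratio.sub tendsto_one_div_atTop_nhds_zero_nat
    rw [sub_zero] at this
    apply this.congr
    intro n
    ring
  have h2 := (log_ratio_tendsto.pow 2).div_const 2
  have h3 := h1.mul h2
  have hval : (Real.exp 2)⁻¹ * ((2:ℝ)^2/2) = 2/Real.exp 2 := by
    rw [inv_eq_one_div]
    ring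
  rw [hval] at h3
  apply h3.congr
  intro n
  ring

lemma aseq_le_one {n i : ℕ} (hn : 100 ≤ n) : aseq n i ≤ 1 := by
  have h13 := lstar_ge13 hn
  unfold aseq
  split
  · next h =>
    set l := lstar n with hl
    have hlR : (13:ℝ) ≤ l := by exact_mod_cast h13
    have hiR : (13:ℝ) ≤ i := by exact_mod_cast h13.trans h
    have hi0 : (0:ℝ) < i := by linarith
    have hsum : ∑ j ∈ Finset.Icc l i, 1/((j:ℝ)-1) ≤ (Finset.Icc l i).card • (1/((l:ℝ)-1)) := by
      apply Finset.sum_le_card_nsmul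
      intro j hj
      simp only [Finset.mem_Icc] at hj
      have : (l:ℝ) ≤ j := by exact_mod_cast hj.1
      apply one_div_le_one_div_of_le (by linarith) (by linarith)
    rw [Nat.card_Icc, nsmul_eq_mul] at hsum
    have hcard : ((i + 1 - l : ℕ) : ℝ) = (i:ℝ) + 1 - l := by
      have : l ≤ i + 1 := by omega
      push_cast [this]
      ring
    rw [hcard] at hsum
    calc ((l:ℝ)-1)/i * ∑ j ∈ Finset.Icc l i, 1/((j:ℝ)-1)
        ≤ ((l:ℝ)-1)/i * (((i:ℝ) + 1 - l) * (1/((l:ℝ)-1))) := by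
          apply mul_le_mul_of_nonneg_left hsum (div_nonneg (by linarith) hi0.le)
      _ = ((i:ℝ) + 1 - l)/i * (((l:ℝ)-1) * (1/((l:ℝ)-1))) := by ring
      _ = ((i:ℝ) + 1 - l)/i := by
          rw [mul_one_div, div_self (by linarith : ((l:ℝ)-1) ≠ 0), mul_one]
      _ ≤ 1 := by
          rw [div_le_one hi0]
          linarith
  · norm_num

lemma abar_le_one {n : ℕ} (hn : 100 ≤ n) :
    (1/(n:ℝ)) * ∑ i ∈ Finset.Icc 1 n, aseq n i ≤ 1 := by
  have hn0 : (0:ℝ) < n := by positivity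
  have hsum : ∑ i ∈ Finset.Icc 1 n, aseq n i ≤ (n:ℝ) := by
    calc ∑ i ∈ Finset.Icc 1 n, aseq n i ≤ ∑ i ∈ Finset.Icc 1 n, (1:ℝ) :=
          Finset.sum_le_sum fun i _ => aseq_le_one hn
      _ = (n:ℝ) := by simp [Nat.card_Icc]
  calc (1/(n:ℝ)) * ∑ i ∈ Finset.Icc 1 n, aseq n i ≤ (1/(n:ℝ)) * n := by
        apply mul_le_mul_of_nonneg_left hsum (by positivity)
    _ = 1 := by field_simp

lemma part1 :
    2 / Real.exp 2 ≤
      Filter.liminf (fun n : ℕ => (1 / (n : ℝ)) * ∑ i ∈ Finset.Icc 1 n, aseq n i)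
        Filter.atTop := by
  have hev : ∀ᶠ n : ℕ in atTop, (1/(n:ℝ)) * (((lstar n:ℝ)-1) *
      ((Real.log ((n:ℝ)+1) - Real.log (lstar n))^2/2))
      ≤ (1/(n:ℝ)) * ∑ i ∈ Finset.Icc 1 n, aseq n i := by
    filter_upwards [eventually_ge_atTop 100] with n hn
    exact mul_le_mul_of_nonneg_left (part1_main hn) (by positivity)
  have h2 := liminf_le_liminf hev
    (b_tendsto.isBoundedUnder_ge)
    (isCoboundedUnder_ge_of_eventually_le atTop
      ((eventually_ge_atTop 100).mono fun n hn => abar_le_one hn))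
  rwa [b_tendsto.liminf_eq] at h2

/-! ### Part 2: the maximum tends to 1/e -/

lemma log_le_div_e {x : ℝ} (hx : 0 < x) : Real.log x ≤ x / Real.exp 1 := by
  have h := Real.log_le_sub_one_of_pos (x := x / Real.exp 1) (by positivity)
  rw [Real.log_div hx.ne' (Real.exp_pos 1).ne', Real.log_exp] at h
  linarith

lemma two_le_e : (2:ℝ) ≤ Real.exp 1 := by
  have := Real.add_one_le_exp (1:ℝ); linarith

lemma sup_upper {n : ℕ} (hn : 100 ≤ n) :
    sSup (aseq n '' Set.Icc 1 n) ≤ ((lstar n:ℝ)-1)/(Real.exp 1 * ((lstar n:ℝ)-2)) := by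
  have h13 := lstar_ge13 hn
  have hLR : (13:ℝ) ≤ lstar n := by exact_mod_cast h13
  have hrhs : (0:ℝ) ≤ ((lstar n:ℝ)-1)/(Real.exp 1 * ((lstar n:ℝ)-2)) := by
    apply div_nonneg (by linarith)
    have := Real.exp_pos 1
    nlinarith
  apply csSup_le
  · exact (Set.nonempty_Icc.mpr (by omega)).image _
  · rintro x ⟨i, hi, rfl⟩
    rw [Set.mem_Icc] at hi
    rw [aseq]
    split
    · next h =>
      set L := (lstar n : ℝ) with hL
      have hIR : (13:ℝ) ≤ i := by exact_mod_cast h13.trans h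
      have hLI : L ≤ (i:ℝ) := by rw [hL]; exact_mod_cast h
      have he := Real.exp_pos 1
      have hS : ∑ j ∈ Finset.Icc (lstar n) i, 1/((j:ℝ)-1)
          ≤ (((i:ℝ)-1)/(L-2))/Real.exp 1 := by
        calc ∑ j ∈ Finset.Icc (lstar n) i, 1/((j:ℝ)-1)
            ≤ Real.log ((i:ℝ)-1) - Real.log (L-2) :=
              sum_inv_sub_one_le (lstar n) i (by omega) (by omega)
          _ = Real.log (((i:ℝ)-1)/(L-2)) :=
              (Real.log_div (by linarith) (by linarith)).symm
          _ ≤ (((i:ℝ)-1)/(L-2))/Real.exp 1 :=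
              log_le_div_e (div_pos (by linarith) (by linarith))
      calc (L-1)/(i:ℝ) * ∑ j ∈ Finset.Icc (lstar n) i, 1/((j:ℝ)-1)
          ≤ (L-1)/(i:ℝ) * ((((i:ℝ)-1)/(L-2))/Real.exp 1) :=
            mul_le_mul_of_nonneg_left hS (div_nonneg (by linarith) (by linarith))
        _ = ((L-1)*((i:ℝ)-1))/((i:ℝ)*((L-2)*Real.exp 1)) := by
            rw [div_div, div_mul_div_comm]
        _ ≤ (L-1)/(Real.exp 1 * (L-2)) := by
            rw [div_le_div_iff₀ (mul_pos (by linarith) (mul_pos (by linarith) he))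
              (mul_pos he (by linarith))]
            nlinarith [mul_nonneg (mul_nonneg (by linarith : (0:ℝ) ≤ L-1)
              (by linarith : (0:ℝ) ≤ L-2)) he.le]
    · exact hrhs

lemma sup_lower {n : ℕ} (hn : 100 ≤ n) :
    ((lstar n:ℝ)-1)/(Real.exp 1 * ((lstar n:ℝ)-1) + 1) ≤ sSup (aseq n '' Set.Icc 1 n) := by
  have h13 := lstar_ge13 hn
  set l := lstar n with hl
  have hLR : (13:ℝ) ≤ l := by exact_mod_cast h13
  have he := Real.exp_pos 1
  have he2 := two_le_e
  set i₀ : ℕ := ⌈Real.exp 1 * ((l:ℝ)-1)⌉₊ with hi₀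
  have hge : Real.exp 1 * ((l:ℝ)-1) ≤ i₀ := Nat.le_ceil _
  have hlt : (i₀:ℝ) < Real.exp 1 * ((l:ℝ)-1) + 1 := Nat.ceil_lt_add_one (by nlinarith)
  have hi0l : l ≤ i₀ := by
    have : (l:ℝ) ≤ i₀ := by nlinarith
    exact_mod_cast this
  have hi0n : i₀ ≤ n := by
    have h1 : (l:ℝ) - 1 < (n:ℝ)/Real.exp 2 := by
      have := lstar_lt (n := n)
      linarith
    have h2 : Real.exp 1 * ((n:ℝ)/Real.exp 2) = (n:ℝ)/Real.exp 1 := by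
      rw [show Real.exp 2 = Real.exp 1 * Real.exp 1 by rw [← Real.exp_add]; norm_num]
      field_simp
    have h3 : (n:ℝ)/Real.exp 1 ≤ (n:ℝ)/2 := by
      apply div_le_div_of_nonneg_left (by positivity) (by norm_num) he2
    have hnR : (100:ℝ) ≤ n := by exact_mod_cast hn
    have : (i₀:ℝ) ≤ n := by nlinarith
    exact_mod_cast this
  have hS : (1:ℝ) ≤ ∑ j ∈ Finset.Icc l i₀, 1/((j:ℝ)-1) := by
    have hbase := sum_inv_sub_one_ge l i₀ (by omega) (by omega)
    have hloglog : Real.log (Real.exp 1 * ((l:ℝ)-1)) ≤ Real.log i₀ :=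
      Real.log_le_log (by nlinarith) hge
    rw [Real.log_mul (Real.exp_pos 1).ne' (by linarith : ((l:ℝ)-1) ≠ 0),
      Real.log_exp] at hloglog
    linarith
  have haseq : ((l:ℝ)-1)/(Real.exp 1 * ((l:ℝ)-1) + 1) ≤ aseq n i₀ := by
    rw [aseq, ← hl, if_pos hi0l]
    have hi0R : (13:ℝ) ≤ i₀ := by exact_mod_cast h13.trans hi0l
    calc ((l:ℝ)-1)/(Real.exp 1 * ((l:ℝ)-1) + 1)
        ≤ ((l:ℝ)-1)/(i₀:ℝ) := by gcongr <;> linarith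
      _ = ((l:ℝ)-1)/(i₀:ℝ) * 1 := (mul_one _).symm
      _ ≤ ((l:ℝ)-1)/(i₀:ℝ) * ∑ j ∈ Finset.Icc l i₀, 1/((j:ℝ)-1) :=
          mul_le_mul_of_nonneg_left hS (div_nonneg (by linarith) (by linarith))
  refine le_trans haseq (le_csSup ?_ ?_)
  · exact ((Set.finite_Icc 1 n).image _).bddAbove
  · exact ⟨i₀, Set.mem_Icc.mpr ⟨by omega, hi0n⟩, rfl⟩

lemma u_tendsto :
    Tendsto (fun n : ℕ => ((lstar n:ℝ)-1)/(Real.exp 1 * ((lstar n:ℝ)-2))) atTop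
      (nhds (1/Real.exp 1)) := by
  have hreal : Tendsto (fun t : ℝ => (t-1)/(Real.exp 1 * (t-2))) atTop
      (nhds (1/Real.exp 1)) := by
    have hinv : Tendsto (fun t : ℝ => (t-2)⁻¹) atTop (nhds 0) := by
      apply tendsto_inv_atTop_zero.comp
      simpa [sub_eq_add_neg] using tendsto_atTop_add_const_right atTop (-2:ℝ) tendsto_id
    have h := (tendsto_const_nhds (x := (1/Real.exp 1)) (f := atTop (α := ℝ))).mul
      ((tendsto_const_nhds (x := (1:ℝ)) (f := atTop (α := ℝ))).add hinv)
    rw [add_zero, mul_one] at h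
    apply h.congr'
    filter_upwards [eventually_ge_atTop (3:ℝ)] with t ht
    have h2 : (0:ℝ) < t - 2 := by linarith
    have he := Real.exp_pos 1
    field_simp
    ring
  exact hreal.comp lstar_tendsto

lemma v_tendsto :
    Tendsto (fun n : ℕ => ((lstar n:ℝ)-1)/(Real.exp 1 * ((lstar n:ℝ)-1) + 1)) atTop
      (nhds (1/Real.exp 1)) := by
  have hreal : Tendsto (fun t : ℝ => (t-1)/(Real.exp 1 * (t-1) + 1)) atTop
      (nhds (1/Real.exp 1)) := by
    have hinv : Tendsto (fun t : ℝ => (t-1)⁻¹) atTop (nhds 0) := by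
      apply tendsto_inv_atTop_zero.comp
      simpa [sub_eq_add_neg] using tendsto_atTop_add_const_right atTop (-1:ℝ) tendsto_id
    have h := ((tendsto_const_nhds (x := Real.exp 1) (f := atTop (α := ℝ))).add hinv).inv₀
      (by simpa using (Real.exp_pos 1).ne')
    rw [add_zero] at h
    have h' : Tendsto (fun t : ℝ => (Real.exp 1 + (t-1)⁻¹)⁻¹) atTop (nhds (1/Real.exp 1)) := by
      simpa [one_div] using h
    apply h'.congr'
    filter_upwards [eventually_ge_atTop (2:ℝ)] with t ht
    have h2 : (0:ℝ) < t - 1 := by linarith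
    have he := Real.exp_pos 1
    rw [inv_eq_one_div, div_eq_div_iff (by positivity) (by nlinarith)]
    field_simp
  exact hreal.comp lstar_tendsto

lemma part2 :
    Filter.Tendsto (fun n : ℕ => sSup (aseq n '' Set.Icc 1 n)) Filter.atTop
      (nhds (1 / Real.exp 1)) := by
  refine tendsto_of_tendsto_of_tendsto_of_le_of_le' v_tendsto u_tendsto ?_ ?_
  · filter_upwards [eventually_ge_atTop 100] with n hn
    exact sup_lower hn
  · filter_upwards [eventually_ge_atTop 100] with n hn
    exact sup_upper hn

theorem stmt15 :
    2 / Real.exp 2 ≤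
      Filter.liminf (fun n : ℕ => (1 / (n : ℝ)) * ∑ i ∈ Finset.Icc 1 n, aseq n i)
        Filter.atTop ∧
    Filter.Tendsto (fun n : ℕ => sSup (aseq n '' Set.Icc 1 n)) Filter.atTop
      (nhds (1 / Real.exp 1)) := by
  exact ⟨part1, part2⟩
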